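/- Let H be a reduced, commutative, cancellative, atomic monoid. Then c_adj(a) ≥ μ_adj(a) for every a ∈ H, and c_adj(H) = μ_adj(H). -/

import Mathlib

namespace CMR

variable {α : Type*} [CancelCommMonoid α]

/-- The factorization monoid `Z(H)`: the free abelian monoid over the set of atoms of `H`,
modeled as multisets of atoms. -/
abbrev Fac (α : Type*) [CancelCommMonoid α] : Type _ := Multiset {u : α // Irreducible u}

/-- The factorization homomorphism `π : Z(H) → H`. -/
def piF (z : Fac α) : α := (z.map Subtype.val).prod

/-- `Z a`: the set of factorizations of `a`. -/
def Z (a : α) : Set (Fac α) := {z | piF z = a}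

/-- `L a`: the set of lengths of `a`. -/
def L (a : α) : Set ℕ := {n | ∃ z ∈ Z a, Multiset.card z = n}

/-- `Zk a k`: the factorizations of `a` of length `k`. -/
def Zk (a : α) (k : ℕ) : Set (Fac α) := {z ∈ Z a | Multiset.card z = k}

/-- `ZM a M`: the factorizations of `a` whose length lies in `M`. -/
def ZM (a : α) (M : Set ℕ) : Set (Fac α) := {z ∈ Z a | Multiset.card z ∈ M}

/-- The distance between two factorizations:
`d(z,z') = max (|z / gcd(z,z')|, |z' / gcd(z,z')|)`. -/
noncomputable def d (z z' : Fac α) : ℕ :=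
  letI := Classical.decEq {u : α // Irreducible u}
  max (Multiset.card (z - z')) (Multiset.card (z' - z))

/-- The distance between two sets of factorizations, the minimum of pairwise
distances (with the convention `sInf ∅ = 0`). -/
noncomputable def dS (X Y : Set (Fac α)) : ℕ :=
  sInf {n : ℕ | ∃ x ∈ X, ∃ y ∈ Y, d x y = n}

/-- `k` and `l` are adjacent lengths of `a` (with `k < l`):
`L(a) ∩ [k, l] = {k, l}`. -/
def Adjacent (a : α) (k l : ℕ) : Prop :=
  k ∈ L a ∧ l ∈ L a ∧ k < l ∧ ∀ m ∈ L a, k ≤ m → m ≤ l → m = k ∨ m = l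

/-- A chain of factorizations of `a` from `z` to `z'` whose consecutive members
satisfy the step predicate `P`. -/
def Chain (a : α) (P : Fac α → Fac α → Prop) (z z' : Fac α) : Prop :=
  ∃ (n : ℕ) (c : Fin (n + 1) → Fac α),
    c 0 = z ∧ c (Fin.last n) = z' ∧ (∀ i, c i ∈ Z a) ∧
    ∀ i : Fin n, P (c i.castSucc) (c i.succ)

/-- The catenary degree of an element: the smallest `N ∈ ℕ∞` such that any two
factorizations of `a` are connected by an `N`-chain. -/
noncomputable def cat (a : α) : ℕ∞ :=
  sInf {N : ℕ∞ | ∀ z ∈ Z a, ∀ z' ∈ Z a,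
    Chain a (fun x y => (d x y : ℕ∞) ≤ N) z z'}

/-- The equal catenary degree of an element: the smallest `N ∈ ℕ∞` such that any two
factorizations of `a` of the same length are connected by an equal-length `N`-chain. -/
noncomputable def ceq (a : α) : ℕ∞ :=
  sInf {N : ℕ∞ | ∀ z ∈ Z a, ∀ z' ∈ Z a, Multiset.card z = Multiset.card z' →
    Chain a (fun x y => (d x y : ℕ∞) ≤ N ∧ Multiset.card x = Multiset.card y) z z'}

/-- The monotone catenary degree of an element: the smallest `N ∈ ℕ∞` such that any two
factorizations of `a` (ordered by length) are connected by a monotone `N`-chain. -/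
noncomputable def cmon (a : α) : ℕ∞ :=
  sInf {N : ℕ∞ | ∀ z ∈ Z a, ∀ z' ∈ Z a, Multiset.card z ≤ Multiset.card z' →
    Chain a (fun x y => (d x y : ℕ∞) ≤ N ∧ Multiset.card x ≤ Multiset.card y) z z'}

/-- The adjacent catenary degree of an element:
`c_adj(a) = sup{d(Z_k(a), Z_l(a)) : k, l ∈ L(a) adjacent}`. -/
noncomputable def cadj (a : α) : ℕ∞ :=
  sSup {r : ℕ∞ | ∃ k l : ℕ, Adjacent a k l ∧ r = (dS (Zk a k) (Zk a l) : ℕ∞)}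

noncomputable def catH (α : Type*) [CancelCommMonoid α] : ℕ∞ := ⨆ a : α, cat a
noncomputable def ceqH (α : Type*) [CancelCommMonoid α] : ℕ∞ := ⨆ a : α, ceq a
noncomputable def cmonH (α : Type*) [CancelCommMonoid α] : ℕ∞ := ⨆ a : α, cmon a
noncomputable def cadjH (α : Type*) [CancelCommMonoid α] : ℕ∞ := ⨆ a : α, cadj a

/-- `gcd(x, y) ≠ 1`: the two factorizations share an atom. -/
def RStep (x y : Fac α) : Prop := ∃ u, u ∈ x ∧ u ∈ y

/-- `z ≈ z'`: there is an `R`-chain concatenating `z` and `z'` in `Z a`. -/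
def RRel (a : α) (z z' : Fac α) : Prop := Chain a RStep z z'

/-- `z ≈_eq z'`: there is an equal-length `R`-chain concatenating `z` and `z'` in `Z a`. -/
def RRelEq (a : α) (z z' : Fac α) : Prop :=
  Chain a (fun x y => RStep x y ∧ Multiset.card x = Multiset.card y) z z'

/-- There is a monotone `R`-chain from `z` to `z'` in `Z a`. -/
def MonRChain (a : α) (z z' : Fac α) : Prop :=
  Chain a (fun x y => RStep x y ∧ Multiset.card x ≤ Multiset.card y) z z'

/-- `μ(a)`: the supremum, over the `R`-classes `ρ` of `Z a`, of the minimal length of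
an element of `ρ`. -/
noncomputable def mu (a : α) : ℕ∞ :=
  sSup {r : ℕ∞ | ∃ z ∈ Z a,
    r = ((sInf {n : ℕ | ∃ z', RRel a z z' ∧ Multiset.card z' = n} : ℕ) : ℕ∞)}

noncomputable def muH (α : Type*) [CancelCommMonoid α] : ℕ∞ := ⨆ a : α, mu a

/-- `μ_eq(a) = sup{k ∈ L(a) : Z_k(a) has more than one ≈_eq-class}`. -/
noncomputable def mueq (a : α) : ℕ∞ :=
  sSup {r : ℕ∞ | ∃ k ∈ L a,
    (∃ z ∈ Zk a k, ∃ z' ∈ Zk a k, ¬ RRelEq a z z') ∧ r = (k : ℕ∞)}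

noncomputable def mueqH (α : Type*) [CancelCommMonoid α] : ℕ∞ := ⨆ a : α, mueq a

/-- `μ_adj(a) = sup{k ∈ L(a) : d(Z_k(a), Z_l(a)) = k for the l ∈ L(a), l < k adjacent to k}`. -/
noncomputable def muadj (a : α) : ℕ∞ :=
  sSup {r : ℕ∞ | ∃ k ∈ L a,
    (∃ l : ℕ, Adjacent a l k ∧ dS (Zk a k) (Zk a l) = k) ∧ r = (k : ℕ∞)}

noncomputable def muadjH (α : Type*) [CancelCommMonoid α] : ℕ∞ := ⨆ a : α, muadj a

/-- The monoid of relations of `H`, as a subset of `Z(H) × Z(H)`. -/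
def relMon (α : Type*) [CancelCommMonoid α] : Set (Fac α × Fac α) :=
  {p | piF p.1 = piF p.2}

/-- The monoid of equal-length relations of `H`. -/
def relMonEq (α : Type*) [CancelCommMonoid α] : Set (Fac α × Fac α) :=
  {p | piF p.1 = piF p.2 ∧ Multiset.card p.1 = Multiset.card p.2}

/-- The monoid of monotone relations of `H`. -/
def relMonMon (α : Type*) [CancelCommMonoid α] : Set (Fac α × Fac α) :=
  {p | piF p.1 = piF p.2 ∧ Multiset.card p.1 ≤ Multiset.card p.2}

/-- `p` is an atom (irreducible element) of the reduced submonoid `S` of `Z(H) × Z(H)`. -/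
def IsAtomIn (S : Set (Fac α × Fac α)) (p : Fac α × Fac α) : Prop :=
  p ∈ S ∧ p ≠ 0 ∧ ∀ q ∈ S, ∀ r ∈ S, p = q + r → q = 0 ∨ r = 0

/-- `A_a(S) = A(S) ∩ (Z(a) × Z(a))`. -/
def AtomsAt (S : Set (Fac α × Fac α)) (a : α) : Set (Fac α × Fac α) :=
  {p | IsAtomIn S p ∧ p.1 ∈ Z a ∧ p.2 ∈ Z a}

/-- The tame degree `t(a, x)`. -/
noncomputable def tdeg (a : α) (x : Fac α) : ℕ∞ :=
  sInf {N : ℕ∞ | ∀ z ∈ Z a, (∃ w ∈ Z a, x ≤ w) →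
    ∃ z' ∈ Z a, x ≤ z' ∧ (d z z' : ℕ∞) ≤ N}

/-- The tame degree `t(H) = sup{t(a, u) : a ∈ H, u ∈ A(H)}`. -/
noncomputable def tH (α : Type*) [CancelCommMonoid α] : ℕ∞ :=
  ⨆ (a : α) (u : {u : α // Irreducible u}), tdeg a {u}

/-- The `m`-adjacent catenary degree of an element:
`c_{ad,m}(a) = sup{d(Z_k(a), Z_{[k-m,k)}(a)) : k ∈ L(a)}`. -/
noncomputable def cadm (m : ℕ) (a : α) : ℕ∞ :=
  sSup {r : ℕ∞ | ∃ k ∈ L a, r = (dS (Zk a k) (ZM a (Set.Ico (k - m) k)) : ℕ∞)}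

noncomputable def cadmH (α : Type*) [CancelCommMonoid α] (m : ℕ) : ℕ∞ := ⨆ a : α, cadm m a

/-- `μ_{ad,m}(a) = sup{k ∈ L(a) : d(Z_k(a), Z_{[k-m,k)}(a)) = k}`. -/
noncomputable def muadm (m : ℕ) (a : α) : ℕ∞ :=
  sSup {r : ℕ∞ | ∃ k ∈ L a, dS (Zk a k) (ZM a (Set.Ico (k - m) k)) = k ∧ r = (k : ℕ∞)}

noncomputable def muadmH (α : Type*) [CancelCommMonoid α] (m : ℕ) : ℕ∞ := ⨆ a : α, muadm m a

/-- `H` is reduced: the only unit is `1`. -/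
def Reduced (α : Type*) [CancelCommMonoid α] : Prop := ∀ a : α, IsUnit a → a = 1

/-- `H` is atomic: every element is a product of atoms. -/
def Atomic (α : Type*) [CancelCommMonoid α] : Prop := ∀ a : α, ∃ z : Fac α, piF z = a

/-- The ascending chain condition on principal ideals. -/
def ACCP (α : Type*) [CancelCommMonoid α] : Prop :=
  ∀ f : ℕ → α, (∀ n, f (n + 1) ∣ f n) → ∃ N, ∀ n, N ≤ n → f N ∣ f n

lemma d_comm' (z z' : Fac α) : d z z' = d z' z := by
  unfold d; exact max_comm _ _

lemma dS_comm' (X Y : Set (Fac α)) : dS X Y = dS Y X := by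
  unfold dS
  congr 1
  ext n
  constructor
  · rintro ⟨x, hx, y, hy, h⟩; exact ⟨y, hy, x, hx, by rw [d_comm']; exact h⟩
  · rintro ⟨x, hx, y, hy, h⟩; exact ⟨y, hy, x, hx, by rw [d_comm']; exact h⟩

lemma piF_add' (s t : Fac α) : piF (s + t) = piF s * piF t := by
  simp [piF]

lemma key_adj {a : α} {k l : ℕ} (h : Adjacent a k l) :
    ((dS (Zk a k) (Zk a l) : ℕ) : ℕ∞) ≤ muadjH α := by
  classical
  obtain ⟨hk, hl, hkl, hadj⟩ := h
  set D := dS (Zk a k) (Zk a l) with hDdef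
  -- the defining set of D is nonempty
  obtain ⟨zx, hzx, hzxc⟩ := hk
  obtain ⟨zy, hzy, hzyc⟩ := hl
  have hSne : {n : ℕ | ∃ x ∈ Zk a k, ∃ y ∈ Zk a l, d x y = n}.Nonempty :=
    ⟨d zx zy, zx, ⟨hzx, hzxc⟩, zy, ⟨hzy, hzyc⟩, rfl⟩
  have hDmem := Nat.sInf_mem hSne
  obtain ⟨x, hx, y, hy, hdxy⟩ := hDmem
  letI := Classical.decEq {u : α // Irreducible u}
  set g := x ∩ y with hg
  have hgx : g ≤ x := (Multiset.inter_le_left : x ∩ y ≤ x)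
  have hgy : g ≤ y := (Multiset.inter_le_right : x ∩ y ≤ y)
  set x' := x - g with hx'
  set y' := y - g with hy'
  have hxg : g + x' = x := by rw [hx']; exact add_tsub_cancel_of_le hgx
  have hyg : g + y' = y := by rw [hy']; exact add_tsub_cancel_of_le hgy
  have hcx : Multiset.card x = k := hx.2
  have hcy : Multiset.card y = l := hy.2
  have hcg : Multiset.card g ≤ k := by
    rw [← hcx]; exact Multiset.card_le_card hgx
  have hcx' : Multiset.card x' = k - Multiset.card g := by
    rw [hx', Multiset.card_sub hgx, hcx]
  have hcy' : Multiset.card y' = l - Multiset.card g := by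
    rw [hy', Multiset.card_sub hgy, hcy]
  -- identify D
  have hxy : x - y = x' := by rw [hx', hg, Multiset.sub_inter]
  have hyx : y - x = y' := by
    rw [hy', hg, Multiset.inter_comm, Multiset.sub_inter]
  have hdxy2 : d x y = D := hdxy
  have hD : D = Multiset.card y' := by
    have h0 : d x y = max (Multiset.card (x - y)) (Multiset.card (y - x)) := rfl
    rw [hxy, hyx, hcx', hcy'] at h0
    rw [← hdxy2, h0, max_eq_right (Nat.sub_le_sub_right hkl.le _), hcy']
  have hcx'D : Multiset.card x' < D := by
    rw [hD, hcx', hcy']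
    exact Nat.sub_lt_sub_right hcg hkl
  have hgD : Multiset.card g + D = l := by
    rw [hD, hcy']
    have : Multiset.card g ≤ l := hcg.trans hkl.le
    omega
  have hgx'k : Multiset.card g + Multiset.card x' = k := by
    rw [hcx']; omega
  -- the element b
  set b := piF y' with hb
  have hpx : piF x = a := hx.1
  have hpy : piF y = a := hy.1
  have hpx' : piF x' = b := by
    have h1 : piF g * piF x' = a := by rw [← piF_add', hxg, hpx]
    have h2 : piF g * piF y' = a := by rw [← piF_add', hyg, hpy]
    exact mul_left_cancel (h1.trans h2.symm)
  have hgb : piF g * b = a := by rw [hb, ← piF_add', hyg, hpy]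
  have hDLb : D ∈ L b := ⟨y', rfl, hD.symm⟩
  have hx'Lb : Multiset.card x' ∈ L b := ⟨x', hpx', rfl⟩
  -- m: the maximal length of b below D
  set T := {j : ℕ | j ∈ L b ∧ j < D} with hT
  have hTx' : Multiset.card x' ∈ T := ⟨hx'Lb, hcx'D⟩
  have hTbdd : BddAbove T := ⟨D, fun j hj => hj.2.le⟩
  set m := sSup T with hm
  have hmT : m ∈ T := Nat.sSup_mem ⟨_, hTx'⟩ hTbdd
  have hmD : m < D := hmT.2
  have hx'm : Multiset.card x' ≤ m := le_csSup hTbdd hTx'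
  -- g + m = k
  have hgm : Multiset.card g + m = k := by
    obtain ⟨v, hv, hvc⟩ := hmT.1
    have hgv : piF (g + v) = a := by
      rw [piF_add', show piF v = b from hv]; exact hgb
    have hgvL : Multiset.card g + m ∈ L a := by
      refine ⟨g + v, hgv, ?_⟩
      rw [Multiset.card_add, hvc]
    have h1 : k ≤ Multiset.card g + m := by omega
    have h2 : Multiset.card g + m < l := by omega
    rcases hadj _ hgvL h1 h2.le with h | h
    · exact h
    · omega
  -- key claim: elements of g + Zk b * are in Zk a *
  have hlift : ∀ (w : Fac α) (j : ℕ), w ∈ Zk b j →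
      g + w ∈ Zk a (Multiset.card g + j) := by
    rintro w j ⟨hw1, hw2⟩
    refine ⟨?_, by rw [Multiset.card_add, hw2]⟩
    show piF (g + w) = a
    rw [piF_add', show piF w = b from hw1]; exact hgb
  -- every distance between Zk b D and Zk b m equals D
  have hall : ∀ n ∈ {n : ℕ | ∃ w ∈ Zk b D, ∃ v ∈ Zk b m, d w v = n}, n = D := by
    rintro n ⟨w, hw, v, hv, hdwv⟩
    have hle : n ≤ D := by
      rw [← hdwv]
      have h1 : Multiset.card (w - v) ≤ D := by
        rw [← hw.2]; exact Multiset.card_le_card (tsub_le_self)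
      have h2 : Multiset.card (v - w) ≤ D := by
        have := Multiset.card_le_card (tsub_le_self (a := v) (b := w))
        rw [hv.2] at this; omega
      exact max_le h1 h2
    have hge : D ≤ n := by
      have hwd : d (g + v) (g + w) = d w v := by
        show max (Multiset.card (g + v - (g + w))) (Multiset.card (g + w - (g + v)))
          = max (Multiset.card (w - v)) (Multiset.card (v - w))
        rw [add_tsub_add_eq_tsub_left, add_tsub_add_eq_tsub_left, max_comm]
      have h1 : g + v ∈ Zk a k := by rw [← hgm]; exact hlift v m hv
      have h2 : g + w ∈ Zk a l := by rw [← hgD]; exact hlift w D hw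
      have : d (g + v) (g + w) ∈
          {n : ℕ | ∃ x ∈ Zk a k, ∃ y ∈ Zk a l, d x y = n} :=
        ⟨g + v, h1, g + w, h2, rfl⟩
      have := Nat.sInf_le this
      rw [hwd, hdwv] at this
      exact this
    omega
  -- dS (Zk b D) (Zk b m) = D
  have hdSb : dS (Zk b D) (Zk b m) = D := by
    obtain ⟨v, hv, hvc⟩ := hmT.1
    have hne : {n : ℕ | ∃ w ∈ Zk b D, ∃ v ∈ Zk b m, d w v = n}.Nonempty :=
      ⟨d y' v, y', ⟨rfl, hD.symm⟩, v, ⟨hv, hvc⟩, rfl⟩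
    exact hall _ (Nat.sInf_mem hne)
  -- Adjacent b m D
  have hadjb : Adjacent b m D := by
    refine ⟨hmT.1, hDLb, hmD, fun j hj hmj hjD => ?_⟩
    rcases eq_or_lt_of_le hjD with h | h
    · exact Or.inr h
    · exact Or.inl (le_antisymm (le_csSup hTbdd ⟨hj, h⟩) hmj)
  -- conclude
  have : (D : ℕ∞) ≤ muadj b :=
    le_sSup ⟨D, hDLb, ⟨m, hadjb, hdSb⟩, rfl⟩
  exact this.trans (le_iSup (fun a : α => muadj a) b)

/-- Let `H` be a reduced, commutative, cancellative, atomic monoid. Then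
`c_adj(a) ≥ μ_adj(a)` for every `a ∈ H`, and `c_adj(H) = μ_adj(H)`. -/
theorem stmt6 {α : Type*} [CancelCommMonoid α]
    (hred : Reduced α) (hatomic : Atomic α) :
    (∀ a : α, muadj a ≤ cadj a) ∧ cadjH α = muadjH α := by
  have hmc : ∀ a : α, muadj a ≤ cadj a := by
    intro a
    apply sSup_le
    rintro r ⟨k, hk, ⟨l, hadj, hds⟩, rfl⟩
    apply le_sSup
    exact ⟨l, k, hadj, by rw [dS_comm', hds]⟩
  refine ⟨hmc, le_antisymm ?_ ?_⟩
  · apply iSup_le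
    intro a
    apply sSup_le
    rintro r ⟨k, l, hadj, rfl⟩
    exact key_adj hadj
  · exact iSup_le fun a => (hmc a).trans (le_iSup (fun a : α => cadj a) a)

end CMR
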